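/- Let μ ∈ ℝⁿ be a vector with all entries positive and R a real n × n matrix such that diag(μ)·R is symmetric. Then for every t ∈ ℝ, the matrix diag(μ)·exp(Rt) is symmetric and positive definite. -/

import Mathlib

open Matrix

/-- If `diag(μ)·R` is symmetric with `μ` positive, then `diag(μ)·exp(Rt)` is
symmetric and positive definite for every `t`. -/
theorem diag_mul_exp_posDef {n : ℕ} (μ : Fin n → ℝ) (hμ : ∀ i, 0 < μ i)
    (R : Matrix (Fin n) (Fin n) ℝ) (hsym : (Matrix.diagonal μ * R).IsSymm) (t : ℝ) :
    (Matrix.diagonal μ * NormedSpace.exp (t • R)).IsSymm ∧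
    (Matrix.diagonal μ * NormedSpace.exp (t • R)).PosDef := by
  classical
  set s : Fin n → ℝ := fun i => Real.sqrt (μ i) with hs
  have hs0 : ∀ i, s i ≠ 0 := fun i => ne_of_gt (Real.sqrt_pos.2 (hμ i))
  set A : Matrix (Fin n) (Fin n) ℝ := Matrix.diagonal s with hA
  set A' : Matrix (Fin n) (Fin n) ℝ := Matrix.diagonal (fun i => (s i)⁻¹) with hA'
  have hAA' : A * A' = 1 := by
    have h1 : (fun i => s i * (s i)⁻¹) = fun _ : Fin n => (1:ℝ) :=
      funext fun i => mul_inv_cancel₀ (hs0 i)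
    rw [hA, hA', diagonal_mul_diagonal, h1, Matrix.diagonal_one]
  have hA'A : A' * A = 1 := by
    have h1 : (fun i => (s i)⁻¹ * s i) = fun _ : Fin n => (1:ℝ) :=
      funext fun i => inv_mul_cancel₀ (hs0 i)
    rw [hA, hA', diagonal_mul_diagonal, h1, Matrix.diagonal_one]
  have hAsq : A * A = Matrix.diagonal μ := by
    have h1 : (fun i => s i * s i) = μ := funext fun i => Real.mul_self_sqrt (hμ i).le
    rw [hA, diagonal_mul_diagonal, h1]
  have cancel1 : ∀ X : Matrix (Fin n) (Fin n) ℝ, A * (A' * X) = X := fun X => by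
    rw [← Matrix.mul_assoc, hAA', Matrix.one_mul]
  have cancel2 : ∀ X : Matrix (Fin n) (Fin n) ℝ, A' * (A * X) = X := fun X => by
    rw [← Matrix.mul_assoc, hA'A, Matrix.one_mul]
  have hAT : Aᵀ = A := by rw [hA, Matrix.diagonal_transpose]
  have hA'T : A'ᵀ = A' := by rw [hA', Matrix.diagonal_transpose]
  have hAunit : IsUnit A := ⟨⟨A, A', hAA', hA'A⟩, rfl⟩
  -- Rᵀ * D = D * R
  have hRD : Rᵀ * Matrix.diagonal μ = Matrix.diagonal μ * R := by
    have h := hsym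
    rw [Matrix.IsSymm] at h
    calc Rᵀ * Matrix.diagonal μ = Rᵀ * (Matrix.diagonal μ)ᵀ := by
          rw [Matrix.diagonal_transpose]
      _ = (Matrix.diagonal μ * R)ᵀ := by rw [Matrix.transpose_mul]
      _ = Matrix.diagonal μ * R := h
  set S : Matrix (Fin n) (Fin n) ℝ := A * R * A' with hS
  have h1 : Rᵀ * (A * A) = A * A * R := by rw [hAsq]; exact hRD
  have key : A' * (Rᵀ * A) = A * (R * A') := by
    have h2 := congrArg (fun X => A' * X * A') h1
    simpa only [Matrix.mul_assoc, hAA', hA'A, Matrix.mul_one, Matrix.one_mul,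
      cancel1, cancel2] using h2
  have hSsymm : Sᵀ = S := by
    rw [hS]
    simp only [Matrix.transpose_mul, hAT, hA'T, Matrix.mul_assoc]
    exact key
  -- t • R = A⁻¹ * (t • S) * A and exponentiate
  have hconj : NormedSpace.exp (t • R) = A' * NormedSpace.exp (t • S) * A := by
    have hAinv : A⁻¹ = A' := Matrix.inv_eq_right_inv hAA'
    have hRrw : t • R = A⁻¹ * (t • S) * A := by
      rw [hAinv, hS, Matrix.mul_smul, Matrix.smul_mul]
      congr 1
      simp only [Matrix.mul_assoc, cancel2, hA'A, Matrix.mul_one]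
    rw [hRrw, Matrix.exp_conj' A _ hAunit, hAinv]
  -- square root of exp (t • S)
  set H : Matrix (Fin n) (Fin n) ℝ := NormedSpace.exp ((2⁻¹ : ℝ) • (t • S)) with hH
  have hHsq : H * H = NormedSpace.exp (t • S) := by
    have h2 : t • S = (2 : ℕ) • ((2⁻¹ : ℝ) • (t • S)) := by
      rw [smul_smul, ← Nat.cast_smul_eq_nsmul ℝ, smul_smul]
      congr 1
      push_cast
      ring
    rw [h2, Matrix.exp_nsmul, sq]
  have hHsymm : Hᵀ = H := by
    rw [hH, ← Matrix.exp_transpose, Matrix.transpose_smul, Matrix.transpose_smul, hSsymm]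
  have hHunit : IsUnit H := Matrix.isUnit_exp _
  -- the key factorization
  set B : Matrix (Fin n) (Fin n) ℝ := H * A with hB
  have hfact : Matrix.diagonal μ * NormedSpace.exp (t • R) = Bᵀ * B := by
    rw [hconj, ← hAsq, ← hHsq, hB, Matrix.transpose_mul, hHsymm, hAT]
    simp only [Matrix.mul_assoc, cancel1]
  have hBunit : IsUnit B := hHunit.mul hAunit
  have hBinj : Function.Injective B.mulVec := Matrix.mulVec_injective_iff_isUnit.2 hBunit
  constructor
  · rw [Matrix.IsSymm, hfact, Matrix.transpose_mul, Matrix.transpose_transpose]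
  · rw [hfact]
    refine Matrix.posDef_iff_dotProduct_mulVec.mpr ⟨?_, ?_⟩
    · rw [Matrix.IsHermitian, Matrix.conjTranspose_eq_transpose_of_trivial,
        Matrix.transpose_mul, Matrix.transpose_transpose]
    · intro x hx
      have hy : B.mulVec x ≠ 0 := by
        intro h
        exact hx (hBinj (h.trans (Matrix.mulVec_zero B).symm))
      have hdp : star x ⬝ᵥ (Bᵀ * B) *ᵥ x = (B *ᵥ x) ⬝ᵥ (B *ᵥ x) := by
        rw [star_trivial, ← Matrix.mulVec_mulVec, dotProduct_mulVec,
          Matrix.vecMul_transpose]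
      rw [hdp]
      rcases lt_or_eq_of_le (Finset.sum_nonneg fun i _ => mul_self_nonneg ((B *ᵥ x) i) :
          (0:ℝ) ≤ (B *ᵥ x) ⬝ᵥ (B *ᵥ x)) with h | h
      · exact h
      · exact absurd (dotProduct_self_eq_zero.1 h.symm) hy
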